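/- Let K_{r1,r2,…,rk} be a complete k-partite graph of order n = r1 + r2 + ⋯ + rk, where 2 ≤ k < n and r1 ≥ r2 ≥ ⋯ ≥ rk ≥ 1. Then gp(μ(K_{r1,r2,…,rk})) = max{n, 2·r1}. -/

import Mathlib

open SimpleGraph

variable {V : Type*}

/-- The Mycielskian of a graph `G`: vertices are `some (Sum.inl v)` (original vertices),
`some (Sum.inr v)` (twin vertices), and `none` (the root `u*`). -/
def Mycielskian (G : SimpleGraph V) : SimpleGraph (Option (V ⊕ V)) :=
  SimpleGraph.fromRel (fun x y =>
    (∃ u v, G.Adj u v ∧ x = some (Sum.inl u) ∧ y = some (Sum.inl v)) ∨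
    (∃ u v, G.Adj u v ∧ x = some (Sum.inl u) ∧ y = some (Sum.inr v)) ∨
    (∃ u, x = some (Sum.inr u) ∧ y = none))

/-- `S` is a general position set: no shortest path between two vertices of `S`
contains a third element of `S`. -/
def IsGPSet (G : SimpleGraph V) (S : Set V) : Prop :=
  ∀ u ∈ S, ∀ v ∈ S, ∀ p : G.Walk u v, p.length = G.dist u v →
    ∀ w ∈ S, w ∈ p.support → w = u ∨ w = v

/-- The general position number of `G`: the maximum cardinality of a general position set. -/
noncomputable def gpNumber (G : SimpleGraph V) [Fintype V] : ℕ :=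
  sSup {k | ∃ S : Set V, IsGPSet G S ∧ S.ncard = k}

/-- A gp-set: a general position set of maximum cardinality. -/
def IsGpSet (G : SimpleGraph V) [Fintype V] (S : Set V) : Prop :=
  IsGPSet G S ∧ S.ncard = gpNumber G

section MycAdj
variable {W : Type*} {G : SimpleGraph W}

lemma myc_adj_inl_inl {u v : W} :
    (Mycielskian G).Adj (some (Sum.inl u)) (some (Sum.inl v)) ↔ G.Adj u v := by
  rw [Mycielskian, fromRel_adj]
  constructor
  · rintro ⟨-, (⟨a,b,hab,h1,h2⟩|⟨a,b,hab,h1,h2⟩|⟨a,h1,h2⟩)|(⟨a,b,hab,h1,h2⟩|⟨a,b,hab,h1,h2⟩|⟨a,h1,h2⟩)⟩ <;>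
      simp_all
    exact hab.symm
  · intro h
    exact ⟨by simp [h.ne], Or.inl (Or.inl ⟨u, v, h, rfl, rfl⟩)⟩

lemma myc_adj_inl_inr {u v : W} :
    (Mycielskian G).Adj (some (Sum.inl u)) (some (Sum.inr v)) ↔ G.Adj u v := by
  rw [Mycielskian, fromRel_adj]
  constructor
  · rintro ⟨-, (⟨a,b,hab,h1,h2⟩|⟨a,b,hab,h1,h2⟩|⟨a,h1,h2⟩)|(⟨a,b,hab,h1,h2⟩|⟨a,b,hab,h1,h2⟩|⟨a,h1,h2⟩)⟩ <;>
      simp_all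
  · intro h
    exact ⟨by simp, Or.inl (Or.inr (Or.inl ⟨u, v, h, rfl, rfl⟩))⟩

lemma myc_adj_inr_inr {u v : W} :
    ¬ (Mycielskian G).Adj (some (Sum.inr u)) (some (Sum.inr v)) := by
  rw [Mycielskian, fromRel_adj]
  rintro ⟨-, (⟨a,b,hab,h1,h2⟩|⟨a,b,hab,h1,h2⟩|⟨a,h1,h2⟩)|(⟨a,b,hab,h1,h2⟩|⟨a,b,hab,h1,h2⟩|⟨a,h1,h2⟩)⟩ <;>
    simp_all

lemma myc_adj_inr_none {u : W} :
    (Mycielskian G).Adj (some (Sum.inr u)) none := by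
  rw [Mycielskian, fromRel_adj]
  exact ⟨by simp, Or.inl (Or.inr (Or.inr ⟨u, rfl, rfl⟩))⟩

lemma myc_adj_inl_none {u : W} :
    ¬ (Mycielskian G).Adj (some (Sum.inl u)) none := by
  rw [Mycielskian, fromRel_adj]
  rintro ⟨-, (⟨a,b,hab,h1,h2⟩|⟨a,b,hab,h1,h2⟩|⟨a,h1,h2⟩)|(⟨a,b,hab,h1,h2⟩|⟨a,b,hab,h1,h2⟩|⟨a,h1,h2⟩)⟩ <;>
    simp_all

end MycAdj

section GP
variable {X : Type*} {H : SimpleGraph X} {S : Set X}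

lemma IsGPSet.no_cherry (hS : IsGPSet H S)
    {a b c : X} (ha : a ∈ S) (hb : b ∈ S) (hc : c ∈ S)
    (hab : a ≠ b) (hca : c ≠ a) (hcb : c ≠ b)
    (h1 : H.Adj a c) (h2 : H.Adj c b) (h3 : ¬ H.Adj a b) : False := by
  classical
  set p : H.Walk a b := Walk.cons h1 (Walk.cons h2 Walk.nil) with hp
  have hlen : p.length = 2 := by simp [hp]
  have hd : H.dist a b = 2 := by
    have hle : H.dist a b ≤ 2 := hlen ▸ SimpleGraph.dist_le p
    have h0 : H.dist a b ≠ 0 := fun h =>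
      hab ((SimpleGraph.Reachable.dist_eq_zero_iff ⟨p⟩).mp h)
    have h1' : H.dist a b ≠ 1 := fun h => h3 (SimpleGraph.dist_eq_one_iff_adj.mp h)
    omega
  rcases hS a ha b hb p (by rw [hlen, hd]) c hc (by simp [hp]) with h | h
  · exact hca h
  · exact hcb h

lemma walk_length_two {a b : X} (p : H.Walk a b) (h : p.length = 2) :
    ∃ c, p.support = [a, c, b] ∧ H.Adj a c ∧ H.Adj c b := by
  cases p with
  | nil => simp at h
  | cons h1 q =>
    cases q with
    | nil => simp at h
    | cons h2 q' =>
      cases q' with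
      | nil => exact ⟨_, by simp, h1, h2⟩
      | cons h3 q'' => simp [SimpleGraph.Walk.length_cons] at h

lemma isGPSet_of_indep
    (h1 : ∀ a ∈ S, ∀ b ∈ S, ¬ H.Adj a b)
    (h2 : ∀ a ∈ S, ∀ b ∈ S, a ≠ b → ∃ c, H.Adj a c ∧ H.Adj c b) :
    IsGPSet H S := by
  intro u hu v hv p hp w hw hwsup
  by_cases huv : u = v
  · subst huv
    rw [SimpleGraph.dist_self] at hp
    obtain ⟨a, hA⟩ := List.length_eq_one_iff.mp (by rw [SimpleGraph.Walk.length_support, hp])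
    have hw' := hwsup
    have hu' := p.start_mem_support
    rw [hA] at hw' hu'
    simp at hw' hu'
    left; rw [hw', ← hu']
  · have hd : H.dist u v = 2 := by
      obtain ⟨c, hc1, hc2⟩ := h2 u hu v hv huv
      have hle : H.dist u v ≤ 2 := by
        have := SimpleGraph.dist_le (Walk.cons hc1 (Walk.cons hc2 Walk.nil))
        simpa using this
      have h0 : H.dist u v ≠ 0 := fun h =>
        huv ((SimpleGraph.Reachable.dist_eq_zero_iff
          ⟨Walk.cons hc1 (Walk.cons hc2 Walk.nil)⟩).mp h)
      have h1' : H.dist u v ≠ 1 := fun h => h1 u hu v hv (SimpleGraph.dist_eq_one_iff_adj.mp h)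
      omega
    rw [hd] at hp
    obtain ⟨c, hsup, hac, hcb⟩ := walk_length_two p hp
    rw [hsup] at hwsup
    simp at hwsup
    rcases hwsup with rfl | rfl | rfl
    · left; rfl
    · exact absurd hac (h1 u hu w hw)
    · right; rfl


end GP

lemma myc_upper {k : ℕ} (r : Fin k → ℕ) (hk : 2 ≤ k) (hr : ∀ i, 1 ≤ r i)
    (hmono : Antitone r) (hkn : k < ∑ i, r i)
    {S : Set (Option ((Σ i, Fin (r i)) ⊕ (Σ i, Fin (r i))))}
    (hS : IsGPSet (Mycielskian (SimpleGraph.completeMultipartiteGraph (fun i => Fin (r i)))) S) :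
    S.ncard ≤ max (∑ i, r i) (2 * r ⟨0, lt_of_lt_of_le (by norm_num) hk⟩) := by
  classical
  have hk0 : 0 < k := by omega
  have hk1 : 1 < k := by omega
  set n := ∑ i, r i with hn
  set i0 : Fin k := ⟨0, hk0⟩ with hi0
  set i1 : Fin k := ⟨1, hk1⟩ with hi1
  -- adjacency shorthands
  have adj_ll : ∀ x y : (Σ i, Fin (r i)),
      (Mycielskian (SimpleGraph.completeMultipartiteGraph (fun i => Fin (r i)))).Adj
        (some (Sum.inl x)) (some (Sum.inl y)) ↔ x.1 ≠ y.1 := by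
    intro x y; rw [myc_adj_inl_inl]; simp
  have adj_lr : ∀ x y : (Σ i, Fin (r i)),
      (Mycielskian (SimpleGraph.completeMultipartiteGraph (fun i => Fin (r i)))).Adj
        (some (Sum.inl x)) (some (Sum.inr y)) ↔ x.1 ≠ y.1 := by
    intro x y; rw [myc_adj_inl_inr]; simp
  -- sets A, B
  set A : Set (Σ i, Fin (r i)) := {u | some (Sum.inl u) ∈ S} with hA
  set B : Set (Σ i, Fin (r i)) := {u | some (Sum.inr u) ∈ S} with hB
  have hmemA : ∀ {y : (Σ i, Fin (r i))}, y ∈ A → some (Sum.inl y) ∈ S := fun h => h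
  have hmemB : ∀ {y : (Σ i, Fin (r i))}, y ∈ B → some (Sum.inr y) ∈ S := fun h => h
  -- counting
  have htotal : S.ncard ≤ A.ncard + B.ncard + (if none ∈ S then 1 else 0) := by
    have hsub : S ⊆ (fun u : (Σ i, Fin (r i)) => (some (Sum.inl u) :
          Option ((Σ i, Fin (r i)) ⊕ (Σ i, Fin (r i))))) '' A ∪
        ((fun u : (Σ i, Fin (r i)) => (some (Sum.inr u) :
          Option ((Σ i, Fin (r i)) ⊕ (Σ i, Fin (r i))))) '' B ∪
          (if none ∈ S then {none} else ∅)) := by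
      intro x hx
      rcases x with _ | (u | u)
      · right; right; rw [if_pos hx]; simp
      · left; exact ⟨u, hx, rfl⟩
      · right; left; exact ⟨u, hx, rfl⟩
    have h0 := Set.ncard_le_ncard hsub (Set.toFinite _)
    have h1 := Set.ncard_union_le
      ((fun u : (Σ i, Fin (r i)) => (some (Sum.inl u) :
          Option ((Σ i, Fin (r i)) ⊕ (Σ i, Fin (r i))))) '' A)
      ((fun u : (Σ i, Fin (r i)) => (some (Sum.inr u) :
          Option ((Σ i, Fin (r i)) ⊕ (Σ i, Fin (r i))))) '' B ∪
        (if none ∈ S then {none} else ∅))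
    have h2 := Set.ncard_union_le
      ((fun u : (Σ i, Fin (r i)) => (some (Sum.inr u) :
          Option ((Σ i, Fin (r i)) ⊕ (Σ i, Fin (r i))))) '' B)
      (if none ∈ S then ({none} : Set (Option ((Σ i, Fin (r i)) ⊕ (Σ i, Fin (r i))))) else ∅)
    have hA' := Set.ncard_image_le (s := A)
      (f := fun u : (Σ i, Fin (r i)) => (some (Sum.inl u) :
          Option ((Σ i, Fin (r i)) ⊕ (Σ i, Fin (r i))))) (Set.toFinite _)
    have hB' := Set.ncard_image_le (s := B)
      (f := fun u : (Σ i, Fin (r i)) => (some (Sum.inr u) :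
          Option ((Σ i, Fin (r i)) ⊕ (Σ i, Fin (r i))))) (Set.toFinite _)
    have he : (if none ∈ S then ({none} :
        Set (Option ((Σ i, Fin (r i)) ⊕ (Σ i, Fin (r i))))) else ∅).ncard ≤
        (if none ∈ S then 1 else 0) := by
      split <;> simp
    omega
  -- part sets
  set P : Fin k → Set (Σ i, Fin (r i)) := fun i => {u | u.1 = i} with hP
  have hPcard : ∀ i, (P i).ncard = r i := by
    intro i
    have himg : P i = Sigma.mk i '' Set.univ := by
      ext ⟨j, a⟩
      simp only [hP, Set.mem_setOf_eq, Set.image_univ, Set.mem_range]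
      constructor
      · rintro rfl; exact ⟨a, rfl⟩
      · rintro ⟨b, hb⟩; exact (congrArg Sigma.fst hb).symm
    rw [himg, Set.ncard_image_of_injective _ sigma_mk_injective, Set.ncard_univ]
    simp
  have hcardn : Nat.card (Σ i, Fin (r i)) = n := by
    simp [hn, Nat.card_eq_fintype_card]
  -- arithmetic facts
  have hr1 : ∀ i, r i ≤ r i0 := fun i => hmono (by simp [hi0, Fin.le_def])
  have hr1n : r i0 ≤ n := Finset.single_le_sum (fun i _ => Nat.zero_le (r i)) (Finset.mem_univ i0)
  have hi01 : i0 ≠ i1 := by simp [hi0, hi1, Fin.ext_iff]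
  have hpair : ∀ p q : Fin k, p ≠ q → r p + r q ≤ n := by
    intro p q hpq
    have h := Finset.sum_le_sum_of_subset (Finset.subset_univ ({p, q} : Finset (Fin k)))
      (f := r)
    rwa [Finset.sum_pair hpq] at h
  have h2r1 : 2 ≤ r i0 := by
    by_contra h
    push_neg at h
    have hall : ∀ i, r i ≤ 1 := fun i => le_trans (hr1 i) (by omega)
    have hle : (∑ i, r i) ≤ ∑ _i : Fin k, 1 := Finset.sum_le_sum fun i _ => hall i
    simp at hle
    omega
  have hr1n' : r i0 + 1 ≤ n := by
    have := hpair i0 i1 hi01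
    have := hr i1
    omega
  -- cherry constraints
  have hC1 : none ∈ S → ∀ u ∈ B, ∀ v ∈ B, u = v := by
    intro h0 u hu v hv
    by_contra hne
    exact hS.no_cherry (hmemB hu) (hmemB hv) h0 (by simpa using hne) (by simp) (by simp)
      myc_adj_inr_none myc_adj_inr_none.symm myc_adj_inr_inr
  have hC2 : none ∈ S → ∀ u ∈ B, ∀ y ∈ A, y.1 = u.1 := by
    intro h0 u hu y hy
    by_contra hne
    exact hS.no_cherry (hmemA hy) h0 (hmemB hu) (by simp) (by simp) (by simp)
      ((adj_lr y u).mpr hne) myc_adj_inr_none myc_adj_inl_none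
  have hC2' : ∀ u ∈ B, ∀ y ∈ A, ∀ z ∈ A, y ≠ z → y.1 = z.1 → y.1 = u.1 := by
    intro u hu y hy z hz hyz hpart
    by_contra hne
    have hzu : z.1 ≠ u.1 := hpart ▸ hne
    exact hS.no_cherry (hmemA hy) (hmemA hz) (hmemB hu) (by simpa using hyz) (by simp) (by simp)
      ((adj_lr y u).mpr hne) ((adj_lr z u).mpr hzu).symm
      (fun h => (adj_ll y z).mp h hpart)
  have hC3 : ∀ y ∈ A, ∀ z ∈ A, y ≠ z → y.1 = z.1 → ∀ x ∈ A, x.1 = y.1 := by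
    intro y hy z hz hyz hpart x hx
    by_contra hne
    have hxz : x.1 ≠ z.1 := by rw [← hpart]; exact hne
    have hxy : x ≠ y := fun h => hne (by rw [h])
    have hxz' : x ≠ z := fun h => hxz (by rw [h])
    exact hS.no_cherry (hmemA hy) (hmemA hz) (hmemA hx) (by simpa using hyz)
      (by simpa using hxy) (by simpa using hxz')
      ((adj_ll y x).mpr fun h => hne h.symm) ((adj_ll x z).mpr hxz)
      (fun h => (adj_ll y z).mp h hpart)
  have hC4 : ∀ y ∈ A, ∀ v ∈ B, y.1 = v.1 → ∀ x ∈ A, x.1 = y.1 := by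
    intro y hy v hv hyv x hx
    by_contra hne
    have hxy : x ≠ y := fun h => hne (by rw [h])
    have hxv : x.1 ≠ v.1 := by rw [← hyv]; exact hne
    exact hS.no_cherry (hmemA hy) (hmemB hv) (hmemA hx) (by simp) (by simpa using hxy) (by simp)
      ((adj_ll y x).mpr fun h => hne h.symm) ((adj_lr x v).mpr hxv)
      (fun h => (adj_lr y v).mp h hyv)
  have hC5 : ∀ u ∈ B, ∀ v ∈ B, u ≠ v → ∀ x ∈ A, x.1 = u.1 ∨ x.1 = v.1 := by
    intro u hu v hv huv x hx
    by_contra hne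
    push_neg at hne
    obtain ⟨h1, h2⟩ := hne
    exact hS.no_cherry (hmemB hu) (hmemB hv) (hmemA hx) (by simpa using huv) (by simp) (by simp)
      ((adj_lr x u).mpr h1).symm ((adj_lr x v).mpr h2) myc_adj_inr_inr
  -- cardinality tools
  have hAinj_card : ∀ (T : Set (Fin k)), (∀ x ∈ A, x.1 ∈ T) → Set.InjOn Sigma.fst A →
      A.ncard ≤ T.ncard := fun T hT hI =>
    Set.ncard_le_ncard_of_injOn Sigma.fst hT hI (Set.toFinite T)
  have hsub_card : ∀ (C : Set (Σ i, Fin (r i))) i, C ⊆ P i → C.ncard ≤ r i0 := by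
    intro C i hsub
    calc C.ncard ≤ (P i).ncard := Set.ncard_le_ncard hsub (Set.toFinite _)
    _ = r i := hPcard i
    _ ≤ r i0 := hr1 i
  have hBn : B.ncard ≤ n := by
    have := Set.ncard_le_ncard (Set.subset_univ B) (Set.toFinite _)
    rwa [Set.ncard_univ, hcardn] at this
  have hAk_of_inj : Set.InjOn Sigma.fst A → A.ncard ≤ k := by
    intro hI
    have := hAinj_card Set.univ (fun x _ => Set.mem_univ _) hI
    rwa [Set.ncard_univ, Nat.card_eq_fintype_card, Fintype.card_fin] at this
  have hAmax : A.ncard ≤ max k (r i0) := by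
    by_cases hinj : ∀ x ∈ A, ∀ y ∈ A, x ≠ y → x.1 ≠ y.1
    · have := hAk_of_inj (fun x hx y hy hxy => by
        by_contra hne
        exact hinj x hx y hy hne hxy)
      omega
    · push_neg at hinj
      obtain ⟨x, hx, y, hy, hxy, hpart⟩ := hinj
      have hA1 : A ⊆ P x.1 := fun z hz => hC3 x hx y hy hxy hpart z hz
      have := hsub_card A x.1 hA1
      omega
  -- main case analysis
  refine le_trans htotal ?_
  by_cases h0 : none ∈ S
  · rw [if_pos h0]
    by_cases hBe : B = ∅
    · have hB0 : B.ncard = 0 := by simp [hBe]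
      refine le_trans ?_ (le_max_left _ _)
      have := max_le_iff.mp (le_refl (max k (r i0)))
      omega
    · obtain ⟨u, hu⟩ := Set.nonempty_iff_ne_empty.mpr hBe
      have hBu : B = {u} := Set.eq_singleton_iff_unique_mem.mpr ⟨hu, fun v hv => hC1 h0 v hv u hu⟩
      have hB1 : B.ncard = 1 := by rw [hBu]; exact Set.ncard_singleton u
      have hAsub : A ⊆ P u.1 := fun y hy => hC2 h0 u hu y hy
      have hA1 := hsub_card A u.1 hAsub
      refine le_trans ?_ (le_max_right _ _)
      omega
  · rw [if_neg h0, add_zero]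
    by_cases hBe : B = ∅
    · have hB0 : B.ncard = 0 := by simp [hBe]
      refine le_trans ?_ (le_max_left _ _)
      have := max_le_iff.mp (le_refl (max k (r i0)))
      omega
    · obtain ⟨u, hu⟩ := Set.nonempty_iff_ne_empty.mpr hBe
      by_cases hBone : ∀ v ∈ B, v.1 = u.1
      · have hBsub : B ⊆ P u.1 := fun v hv => hBone v hv
        have hBr := hsub_card B u.1 hBsub
        by_cases hAq : ∃ y ∈ A, y.1 = u.1
        · obtain ⟨y, hy, hyu⟩ := hAq
          have hAsub : A ⊆ P y.1 := fun x hx => hC4 y hy u hu hyu x hx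
          have hAr := hsub_card A y.1 hAsub
          refine le_trans ?_ (le_max_right _ _)
          omega
        · push_neg at hAq
          by_cases hB2 : ∃ v ∈ B, v ≠ u
          · obtain ⟨v, hv, hvu⟩ := hB2
            have hA0 : A = ∅ := by
              ext x
              simp only [Set.mem_empty_iff_false, iff_false]
              intro hx
              rcases hC5 u hu v hv (fun h => hvu h.symm) x hx with h | h
              · exact hAq x hx h
              · exact hAq x hx (h.trans (hBone v hv))
            have hA0' : A.ncard = 0 := by simp [hA0]
            refine le_trans ?_ (le_max_left _ _)
            omega
          · push_neg at hB2
            have hBu : B = {u} := Set.eq_singleton_iff_unique_mem.mpr ⟨hu, hB2⟩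
            have hB1 : B.ncard = 1 := by rw [hBu]; exact Set.ncard_singleton u
            have hinj : Set.InjOn Sigma.fst A := by
              intro y hy z hz hyz
              by_contra hne
              exact hAq y hy (hC2' u hu y hy z hz hne hyz)
            have hAk := hAk_of_inj hinj
            refine le_trans ?_ (le_max_left _ _)
            omega
      · push_neg at hBone
        obtain ⟨v, hv, hvu⟩ := hBone
        have huv : u ≠ v := fun h => hvu (by rw [h])
        have hinj : Set.InjOn Sigma.fst A := by
          intro y hy z hz hyz
          by_contra hne
          have h1 := hC2' u hu y hy z hz hne hyz
          have h2 := hC2' v hv y hy z hz hne hyz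
          exact hvu (h2.symm.trans h1)
        by_cases hA0 : A = ∅
        · have hA0' : A.ncard = 0 := by simp [hA0]
          refine le_trans ?_ (le_max_left _ _)
          omega
        · obtain ⟨x, hx⟩ := Set.nonempty_iff_ne_empty.mpr hA0
          have key : ∀ a b : (Σ i, Fin (r i)), a ∈ B → b ∈ B → a.1 ≠ b.1 → x.1 = a.1 →
              A.ncard + B.ncard ≤ max n (2 * r i0) := by
            intro a b ha hb hab hxa
            have hA1 : A.ncard ≤ 1 := by
              have hsub' : ∀ z ∈ A, z.1 ∈ ({a.1} : Set (Fin k)) := by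
                intro z hz
                have := hC4 x hx a ha hxa z hz
                simp only [Set.mem_singleton_iff]
                rw [this, hxa]
              have := hAinj_card {a.1} hsub' hinj
              simpa using this
            have hBsub : B ⊆ P a.1 ∪ {b} := by
              intro w hw
              by_cases hwb : w = b
              · right; simp [hwb]
              · left
                rcases hC5 w hw b hb hwb x hx with h | h
                · exact h.symm.trans hxa
                · exact absurd (hxa.symm.trans h) hab
            have hBcard : B.ncard ≤ r i0 + 1 := by
              have h1 := Set.ncard_le_ncard hBsub (Set.toFinite _)
              have h2 := Set.ncard_union_le (P a.1) ({b} : Set (Σ i, Fin (r i)))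
              have h3 := hPcard a.1
              have h4 := hr1 a.1
              simp only [Set.ncard_singleton] at h2
              omega
            refine le_trans ?_ (le_max_right _ _)
            omega
          rcases hC5 u hu v hv huv x hx with h | h
          · exact key u v hu hv (fun hh => hvu hh.symm) h
          · exact key v u hv hu hvu h


lemma isGPSet_twins {W : Type*} (G : SimpleGraph W) :
    IsGPSet (Mycielskian G)
      ((fun u : W => (some (Sum.inr u) : Option (W ⊕ W))) '' Set.univ) := by
  apply isGPSet_of_indep
  · rintro a ⟨u, -, rfl⟩ b ⟨v, -, rfl⟩
    exact myc_adj_inr_inr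
  · rintro a ⟨u, -, rfl⟩ b ⟨v, -, rfl⟩ hne
    exact ⟨none, myc_adj_inr_none, myc_adj_inr_none.symm⟩


/-- For a complete `k`-partite graph `K_{r1,…,rk}` of order
`n = r1 + … + rk` with `2 ≤ k < n` and `r1 ≥ r2 ≥ … ≥ rk ≥ 1`,
`gp(μ(K_{r1,…,rk})) = max {n, 2 r1}`. -/
theorem gpNumber_mycielskian_completeMultipartite {k : ℕ} (r : Fin k → ℕ)
    (hk : 2 ≤ k) (hr : ∀ i, 1 ≤ r i) (hmono : Antitone r) (hkn : k < ∑ i, r i) :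
    gpNumber (Mycielskian (SimpleGraph.completeMultipartiteGraph (fun i => Fin (r i)))) =
      max (∑ i, r i) (2 * r ⟨0, by omega⟩) := by
  classical
  have hk0 : 0 < k := by omega
  have hk1 : 1 < k := by omega
  have hcardn : Nat.card (Σ i, Fin (r i)) = ∑ i, r i := by
    simp [Nat.card_eq_fintype_card]
  -- the twins set
  have hS1gp := isGPSet_twins (SimpleGraph.completeMultipartiteGraph (fun i => Fin (r i)))
  have hS1card : ((fun u : (Σ i, Fin (r i)) => (some (Sum.inr u) :
      Option ((Σ i, Fin (r i)) ⊕ (Σ i, Fin (r i))))) '' Set.univ).ncard = ∑ i, r i := by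
    rw [Set.ncard_image_of_injective _ (fun a b h => by simpa using h), Set.ncard_univ, hcardn]
  -- the part-0 set
  set c0 : (Σ i, Fin (r i)) := ⟨⟨1, hk1⟩, ⟨0, hr ⟨1, hk1⟩⟩⟩ with hc0
  set S2 : Set (Option ((Σ i, Fin (r i)) ⊕ (Σ i, Fin (r i)))) :=
    (fun a : Fin (r ⟨0, hk0⟩) => (some (Sum.inl ⟨⟨0, hk0⟩, a⟩) :
      Option ((Σ i, Fin (r i)) ⊕ (Σ i, Fin (r i))))) '' Set.univ ∪
    (fun a : Fin (r ⟨0, hk0⟩) => (some (Sum.inr ⟨⟨0, hk0⟩, a⟩) :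
      Option ((Σ i, Fin (r i)) ⊕ (Σ i, Fin (r i))))) '' Set.univ with hS2
  have hGadj : ∀ x : Fin (r ⟨0, hk0⟩),
      (SimpleGraph.completeMultipartiteGraph (fun i => Fin (r i))).Adj ⟨⟨0, hk0⟩, x⟩ c0 := by
    intro x
    simp [hc0, Fin.ext_iff]
  have hS2gp : IsGPSet (Mycielskian
      (SimpleGraph.completeMultipartiteGraph (fun i => Fin (r i)))) S2 := by
    apply isGPSet_of_indep
    · rintro a (⟨x, -, rfl⟩ | ⟨x, -, rfl⟩) b (⟨y, -, rfl⟩ | ⟨y, -, rfl⟩)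
      · intro h; rw [myc_adj_inl_inl] at h; simp at h
      · intro h; rw [myc_adj_inl_inr] at h; simp at h
      · intro h; have := h.symm; rw [myc_adj_inl_inr] at this; simp at this
      · exact myc_adj_inr_inr
    · rintro a (⟨x, -, rfl⟩ | ⟨x, -, rfl⟩) b (⟨y, -, rfl⟩ | ⟨y, -, rfl⟩) hne
      · exact ⟨some (Sum.inl c0), myc_adj_inl_inl.mpr (hGadj x),
          myc_adj_inl_inl.mpr ((hGadj y).symm)⟩
      · exact ⟨some (Sum.inl c0), myc_adj_inl_inl.mpr (hGadj x),
          myc_adj_inl_inr.mpr ((hGadj y).symm)⟩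
      · exact ⟨some (Sum.inl c0), (myc_adj_inl_inr.mpr ((hGadj x).symm)).symm,
          myc_adj_inl_inl.mpr ((hGadj y).symm)⟩
      · exact ⟨some (Sum.inl c0), (myc_adj_inl_inr.mpr ((hGadj x).symm)).symm,
          myc_adj_inl_inr.mpr ((hGadj y).symm)⟩
  have hS2card : S2.ncard = 2 * r ⟨0, hk0⟩ := by
    have hdisj : Disjoint
        ((fun a : Fin (r ⟨0, hk0⟩) => (some (Sum.inl ⟨⟨0, hk0⟩, a⟩) :
          Option ((Σ i, Fin (r i)) ⊕ (Σ i, Fin (r i))))) '' Set.univ)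
        ((fun a : Fin (r ⟨0, hk0⟩) => (some (Sum.inr ⟨⟨0, hk0⟩, a⟩) :
          Option ((Σ i, Fin (r i)) ⊕ (Σ i, Fin (r i))))) '' Set.univ) := by
      rw [Set.disjoint_left]
      rintro z ⟨x, -, rfl⟩ ⟨y, -, h⟩
      simp at h
    rw [hS2, Set.ncard_union_eq hdisj (Set.toFinite _) (Set.toFinite _),
      Set.ncard_image_of_injective _ (fun a b h => by simpa using h),
      Set.ncard_image_of_injective _ (fun a b h => by simpa using h), Set.ncard_univ]
    simp [Nat.card_eq_fintype_card]
    omega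
  -- assembly
  have hub : ∀ m ∈ {m | ∃ T : Set (Option ((Σ i, Fin (r i)) ⊕ (Σ i, Fin (r i)))),
      IsGPSet (Mycielskian (SimpleGraph.completeMultipartiteGraph (fun i => Fin (r i)))) T ∧
        T.ncard = m},
      m ≤ max (∑ i, r i) (2 * r ⟨0, hk0⟩) := by
    rintro m ⟨T, hT, rfl⟩
    exact myc_upper r hk hr hmono hkn hT
  have hbdd : BddAbove {m | ∃ T : Set (Option ((Σ i, Fin (r i)) ⊕ (Σ i, Fin (r i)))),
      IsGPSet (Mycielskian (SimpleGraph.completeMultipartiteGraph (fun i => Fin (r i)))) T ∧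
        T.ncard = m} :=
    ⟨max (∑ i, r i) (2 * r ⟨0, hk0⟩), hub⟩
  rw [gpNumber]
  apply le_antisymm
  · exact csSup_le ⟨∑ i, r i, _, hS1gp, hS1card⟩ hub
  · apply max_le
    · exact le_csSup hbdd ⟨_, hS1gp, hS1card⟩
    · exact le_csSup hbdd ⟨S2, hS2gp, hS2card⟩
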